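/- Under a barrier certificate B for system ẋ = f(x) with initial set X_I and unsafe set X_U, the zero-sublevel set Ω₀ = {x ∈ X : B(x) ≤ 0} is a forward invariant set that contains X_I and is disjoint from X_U. -/

import Mathlib

/-- Scalar key lemma: if `g' < 0` whenever `g = 0`, then `g ≤ 0` is forward
invariant. -/
lemma barrier_scalar (g g' : ℝ → ℝ) (hg : ∀ t, HasDerivAt g (g' t) t)
    (hdot : ∀ t, g t = 0 → g' t < 0) (t₀ : ℝ) (h0 : g t₀ ≤ 0) :
    ∀ t, t₀ ≤ t → g t ≤ 0 := by
  intro t₁ ht₁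
  by_contra hpos
  push_neg at hpos
  have hcont : Continuous g := continuous_iff_continuousAt.mpr fun x => (hg x).continuousAt
  set S : Set ℝ := {t | t ∈ Set.Icc t₀ t₁ ∧ g t ≤ 0} with hS
  have hSne : S.Nonempty := ⟨t₀, ⟨le_rfl, ht₁⟩, h0⟩
  have hSclosed : IsClosed S := (isClosed_Icc.inter (isClosed_Iic.preimage hcont) : _)
  have hScompact : IsCompact S :=
    (isCompact_Icc : IsCompact (Set.Icc t₀ t₁)).of_isClosed_subset hSclosed fun t ht => ht.1
  set s := sSup S with hs
  have hsS : s ∈ S := hScompact.sSup_mem hSne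
  have hsub : ∀ t ∈ S, t ≤ s := fun t ht => le_csSup hScompact.bddAbove ht
  have hslt : s < t₁ := hsS.1.2.lt_of_ne fun h => absurd hsS.2 (by rw [h]; exact not_le.mpr hpos)
  have hIoo : ∀ t ∈ Set.Ioo s t₁, 0 < g t := by
    intro t ht
    by_contra hle
    push_neg at hle
    have : t ∈ S := ⟨⟨hsS.1.1.trans ht.1.le, ht.2.le⟩, hle⟩
    exact absurd (hsub t this) (not_le.mpr ht.1)
  have hgs0 : g s = 0 := by
    refine le_antisymm hsS.2 ?_
    have htend : Filter.Tendsto g (nhdsWithin s (Set.Ioi s)) (nhds (g s)) :=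
      (hcont.tendsto s).mono_left nhdsWithin_le_nhds
    refine ge_of_tendsto htend ?_
    filter_upwards [Ioo_mem_nhdsGT_of_mem ⟨le_rfl, hslt⟩] with t ht
    exact (hIoo t ht).le
  have hder := hdot s hgs0
  have hslope : Filter.Tendsto (slope g s) (nhdsWithin s {s}ᶜ) (nhds (g' s)) :=
    hasDerivAt_iff_tendsto_slope.mp (hg s)
  have hslope' : Filter.Tendsto (slope g s) (nhdsWithin s (Set.Ioi s)) (nhds (g' s)) :=
    hslope.mono_left (nhdsWithin_mono s fun t ht => ne_of_gt ht)
  have hev : ∀ᶠ t in nhdsWithin s (Set.Ioi s), slope g s t < 0 :=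
    hslope'.eventually (Filter.Tendsto.eventually_lt_const hder Filter.tendsto_id |>.mono fun _ h => h)
  have hev2 : ∀ᶠ t in nhdsWithin s (Set.Ioi s), t ∈ Set.Ioo s t₁ :=
    Ioo_mem_nhdsGT_of_mem ⟨le_rfl, hslt⟩
  obtain ⟨t, hts, htIoo⟩ := (hev.and hev2).exists
  have hgt : g t < 0 := by
    have hpos' : 0 < t - s := sub_pos.mpr htIoo.1
    have hd : (g t - g s) / (t - s) < 0 := by
      rw [slope_def_field] at hts; exact hts
    rcases div_neg_iff.mp hd with ⟨h1, h2⟩ | ⟨h1, h2⟩ <;> linarith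
  exact absurd (hIoo t htIoo) (not_lt.mpr hgt.le)

theorem barrier_sublevel_invariant {n : ℕ}
    (f : EuclideanSpace ℝ (Fin n) → EuclideanSpace ℝ (Fin n))
    (X XI XU : Set (EuclideanSpace ℝ (Fin n)))
    (hXIX : XI ⊆ X) (hXUX : XU ⊆ X)
    (hlip : ∃ K : NNReal, LipschitzWith K f)
    (B : EuclideanSpace ℝ (Fin n) → ℝ)
    (hB : ContDiff ℝ 1 B)
    (hBI : ∀ x ∈ XI, B x ≤ 0)
    (hBU : ∀ x ∈ XU, 0 < B x)
    (hBdot : ∀ x, B x = 0 → (fderiv ℝ B x) (f x) < 0) :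
    XI ⊆ {x ∈ X | B x ≤ 0} ∧
    Disjoint {x ∈ X | B x ≤ 0} XU ∧
    ∀ (ξ : ℝ → EuclideanSpace ℝ (Fin n)) (t₀ : ℝ),
      (∀ t, HasDerivAt ξ (f (ξ t)) t) →
      (∀ t, ξ t ∈ X) →
      ξ t₀ ∈ {x ∈ X | B x ≤ 0} →
      ∀ t, t₀ ≤ t → ξ t ∈ {x ∈ X | B x ≤ 0} := by
  refine ⟨fun x hx => ⟨hXIX hx, hBI x hx⟩, ?_, ?_⟩
  · rw [Set.disjoint_left]
    rintro x ⟨-, hle⟩ hxU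
    exact absurd (hBU x hxU) (not_lt.mpr hle)
  · intro ξ t₀ hξ hξX hξ0 t ht
    have hg : ∀ u, HasDerivAt (fun v => B (ξ v)) ((fderiv ℝ B (ξ u)) (f (ξ u))) u := by
      intro u
      exact ((hB.differentiable one_ne_zero).differentiableAt.hasFDerivAt).comp_hasDerivAt u (hξ u)
    have := barrier_scalar (fun v => B (ξ v)) (fun v => (fderiv ℝ B (ξ v)) (f (ξ v)))
      hg (fun v hv => hBdot (ξ v) hv) t₀ hξ0.2 t ht
    exact ⟨hξX t, this⟩
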